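/- Let n, r be integers with 1 ≤ r ≤ n and let f : [0,1] → ℝ be (r+2) times continuously differentiable. Then ‖ ((n+r+1)!(n−r)!/((n+1)! n!)) · (M_n f)^{(r)} − M_{n−r}(f^{(r)}) ‖ ≤ (1/4)·‖f^{(r+2)}‖·(n+3)/((n+3)² − r²) + ω(f^{(r)}, r(n−r)/((n+2)² − r²)). -/

import Mathlib

/-- Bernstein basis polynomial `p_{n,k}(x) = C(n,k) x^k (1-x)^{n-k}`. -/
noncomputable def bern (n k : ℕ) (x : ℝ) : ℝ :=
  (n.choose k : ℝ) * x ^ k * (1 - x) ^ (n - k)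

/-- Classical Durrmeyer operator
`M_n(f;x) = (n+1) Σ_{k=0}^n p_{n,k}(x) ∫₀¹ p_{n,k}(t) f(t) dt`. -/
noncomputable def durrmeyer (n : ℕ) (f : ℝ → ℝ) (x : ℝ) : ℝ :=
  ((n : ℝ) + 1) * ∑ k ∈ Finset.range (n + 1),
    bern n k x * ∫ t in (0:ℝ)..1, bern n k t * f t

/-- Supremum norm on `[0,1]`. -/
noncomputable def supNorm (g : ℝ → ℝ) : ℝ :=
  ⨆ x : Set.Icc (0:ℝ) 1, |g x|

/-- First modulus of continuity on `[0,1]`. -/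
noncomputable def modCont (g : ℝ → ℝ) (δ : ℝ) : ℝ :=
  sSup {d : ℝ | ∃ x ∈ Set.Icc (0:ℝ) 1, ∃ y ∈ Set.Icc (0:ℝ) 1, |x - y| ≤ δ ∧ d = |g x - g y|}

open intervalIntegral Finset

lemma bern_cont (n k : ℕ) : Continuous (bern n k) := by
  unfold bern; fun_prop

lemma bern_nonneg {n k : ℕ} {x : ℝ} (hx : x ∈ Set.Icc (0:ℝ) 1) : 0 ≤ bern n k x := by
  obtain ⟨h0, h1⟩ := hx
  exact mul_nonneg (mul_nonneg (by positivity) (pow_nonneg h0 _)) (pow_nonneg (by linarith) _)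

lemma bern_of_gt {n k : ℕ} (h : n < k) (x : ℝ) : bern n k x = 0 := by
  simp [bern, Nat.choose_eq_zero_of_lt h]

lemma bern_sum (a : ℕ) (x : ℝ) : ∑ j ∈ range (a+1), bern a j x = 1 := by
  have := add_pow x (1-x) a
  simp only [add_sub_cancel, one_pow] at this
  rw [show ∑ j ∈ range (a+1), bern a j x
      = ∑ j ∈ range (a+1), x ^ j * (1-x) ^ (a-j) * (a.choose j : ℝ) by
    refine Finset.sum_congr rfl fun j _ => by unfold bern; ring, ← this]

-- derivative formulas
lemma bern_hasDerivAt_succ (a j : ℕ) (x : ℝ) :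
    HasDerivAt (bern (a+1) (j+1)) (((a:ℝ)+1) * (bern a j x - bern a (j+1) x)) x := by
  set m := a - j with hm
  have hx : HasDerivAt (fun x : ℝ => x^(j+1)) (((j:ℝ)+1) * x^j) x := by
    simpa using (hasDerivAt_pow (j+1) x)
  have h1x : HasDerivAt (fun x : ℝ => (1-x)^m) (-((m:ℝ) * (1-x)^(m-1))) x := by
    have h1 : HasDerivAt (fun x : ℝ => (1-x)) (-1) x := by
      simpa using (hasDerivAt_id x).const_sub 1
    have := h1.fun_pow m
    simpa [mul_comm, mul_assoc] using this
  have hC := (hx.fun_mul h1x).const_mul (((a+1).choose (j+1) : ℝ))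
  have hb : bern (a+1) (j+1) = fun x : ℝ =>
      ((a+1).choose (j+1) : ℝ) * (x^(j+1) * (1-x)^m) := by
    funext y; simp only [bern, hm, Nat.succ_sub_succ]; ring
  rw [hb]
  refine hC.congr_deriv ?_
  symm
  have e1 : ((a:ℝ)+1) * (a.choose j) = ((j:ℝ)+1) * ((a+1).choose (j+1)) := by
    have h1 : ((a+1) * a.choose j : ℕ) = ((a+1).choose (j+1) * (j+1) : ℕ) :=
      Nat.add_one_mul_choose_eq a j
    calc ((a:ℝ)+1) * (a.choose j) = (((a+1) * a.choose j : ℕ) : ℝ) := by push_cast; ring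
    _ = (((a+1).choose (j+1) * (j+1) : ℕ) : ℝ) := by rw [h1]
    _ = _ := by push_cast; ring
  have e2 : ((a:ℝ)+1) * (a.choose (j+1)) = ((m:ℕ):ℝ) * ((a+1).choose (j+1)) := by
    have h := Nat.choose_mul_succ_eq a (j+1)
    have h2 : (a.choose (j+1) * (a+1) : ℕ) = ((a+1).choose (j+1) * m : ℕ) := by
      rw [h, hm]; congr 1; omega
    calc ((a:ℝ)+1) * (a.choose (j+1)) = ((a.choose (j+1) * (a+1) : ℕ) : ℝ) := by push_cast; ring
    _ = (((a+1).choose (j+1) * m : ℕ) : ℝ) := by rw [h2]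
    _ = _ := by push_cast; ring
  simp only [bern, hm, Nat.succ_sub_succ, Nat.sub_sub] at *
  have hmm : a - (j+1) = m - 1 := by omega
  rw [hmm]
  linear_combination (x^j * (1-x)^(a-j)) * e1 - (x^(j+1) * (1-x)^(m-1)) * e2

lemma bern_hasDerivAt_zero (a : ℕ) (x : ℝ) :
    HasDerivAt (bern (a+1) 0) (((a:ℝ)+1) * (0 - bern a 0 x)) x := by
  have : HasDerivAt (fun x : ℝ => (1-x)^(a+1)) (-(((a:ℝ)+1) * (1-x)^a)) x := by
    have h1 : HasDerivAt (fun x : ℝ => (1-x)) (-1) x := by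
      simpa using (hasDerivAt_id x).const_sub 1
    simpa [mul_comm] using (h1.fun_pow (a+1))
  have hb : bern (a+1) 0 = fun x : ℝ => (1-x)^(a+1) := funext fun y => by simp [bern]
  have he : ((a:ℝ)+1) * (0 - bern a 0 x) = -(((a:ℝ)+1) * (1-x)^a) := by
    simp only [bern, Nat.choose_zero_right, Nat.cast_one, pow_zero, one_mul,
      Nat.sub_zero, mul_one]
    ring
  rw [hb, he]; exact this

lemma integrable_poly_mul {g : ℝ → ℝ} (hg : Continuous g) (b k : ℕ) :
    IntervalIntegrable (fun t => bern b k t * g t) MeasureTheory.volume 0 1 :=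
  ((bern_cont b k).mul hg).intervalIntegrable 0 1

lemma integral_pow_one_sub (p q : ℕ) :
    ∫ t in (0:ℝ)..1, t^p * (1-t)^q
      = (p.factorial * q.factorial : ℝ) / ((p+q+1).factorial : ℝ) := by
  induction q generalizing p with
  | zero =>
    simp only [pow_zero, mul_one, Nat.factorial_zero, Nat.cast_one, Nat.add_zero]
    rw [integral_pow]
    rw [Nat.factorial_succ]
    push_cast
    field_simp
    simp
  | succ q ih =>
    have key : ((p:ℝ)+1) * (∫ t in (0:ℝ)..1, t^p * (1-t)^(q+1))
        = ((q:ℝ)+1) * (∫ t in (0:ℝ)..1, t^(p+1) * (1-t)^q) := by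
      have hd : ∀ t ∈ Set.uIcc (0:ℝ) 1,
          HasDerivAt (fun t : ℝ => t^(p+1) * (1-t)^(q+1))
            (((p:ℝ)+1) * (t^p * (1-t)^(q+1)) - ((q:ℝ)+1) * (t^(p+1) * (1-t)^q)) t := by
        intro t _
        have h1 : HasDerivAt (fun t : ℝ => t^(p+1)) (((p:ℝ)+1) * t^p) t := by
          simpa using hasDerivAt_pow (p+1) t
        have h2 : HasDerivAt (fun t : ℝ => (1-t)^(q+1)) (-(((q:ℝ)+1) * (1-t)^q)) t := by
          have h0 : HasDerivAt (fun t : ℝ => (1-t)) (-1) t := by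
            simpa using (hasDerivAt_id t).const_sub 1
          have := h0.fun_pow (q+1)
          simpa [mul_comm, mul_assoc] using this
        have := h1.fun_mul h2
        refine this.congr_deriv ?_
        ring
      have hint : IntervalIntegrable
          (fun t : ℝ => ((p:ℝ)+1) * (t^p * (1-t)^(q+1)) - ((q:ℝ)+1) * (t^(p+1) * (1-t)^q))
          MeasureTheory.volume 0 1 := by
        apply Continuous.intervalIntegrable; fun_prop
      have := intervalIntegral.integral_eq_sub_of_hasDerivAt hd hint
      norm_num at this
      rw [intervalIntegral.integral_sub ((by fun_prop : Continuous _).intervalIntegrable 0 1)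
        ((by fun_prop : Continuous _).intervalIntegrable 0 1),
        intervalIntegral.integral_const_mul, intervalIntegral.integral_const_mul] at this
      linarith [this]
    have hp1 : ((p:ℝ)+1) ≠ 0 := by positivity
    have := ih (p+1)
    rw [show ∫ t in (0:ℝ)..1, t^p * (1-t)^(q+1)
        = (((q:ℝ)+1) / ((p:ℝ)+1)) * ∫ t in (0:ℝ)..1, t^(p+1) * (1-t)^q by
      field_simp; linarith [key]]
    rw [this]
    simp only [Nat.factorial_succ]
    push_cast
    have h3 : ((p + q).factorial : ℝ) ≠ 0 := by positivity
    have h4 : ((p.factorial : ℝ)) ≠ 0 := by positivity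
    have h5 : ((q.factorial : ℝ)) ≠ 0 := by positivity
    field_simp
    ring_nf

lemma bern_int (b k i : ℕ) :
    ∫ t in (0:ℝ)..1, t^i * bern b k t
      = (b.choose k : ℝ) * (((k+i).factorial * (b-k).factorial : ℝ) / (((k+i)+(b-k)+1).factorial : ℝ)) := by
  have h : ∀ t : ℝ, t^i * bern b k t = (b.choose k : ℝ) * (t^(k+i) * (1-t)^(b-k)) := by
    intro t; unfold bern; ring
  simp_rw [h]
  rw [intervalIntegral.integral_const_mul, integral_pow_one_sub]

lemma fact_id {b k : ℕ} (hk : k ≤ b) :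
    (b.choose k : ℝ) * (k.factorial : ℝ) * ((b-k).factorial : ℝ) = (b.factorial : ℝ) := by
  exact_mod_cast congrArg (Nat.cast : ℕ → ℝ) (Nat.choose_mul_factorial_mul_factorial hk)

lemma bern_m0 {b k : ℕ} (hk : k ≤ b) :
    ∫ t in (0:ℝ)..1, bern b k t = 1 / ((b:ℝ)+1) := by
  have := bern_int b k 0
  simp only [pow_zero, one_mul, Nat.add_zero] at this
  rw [this, show k + (b-k) + 1 = b + 1 by omega, Nat.factorial_succ]
  have h := fact_id hk
  have h1 : (b.factorial : ℝ) ≠ 0 := by positivity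
  have h2 : ((b:ℝ)+1) ≠ 0 := by positivity
  push_cast
  field_simp
  linear_combination h

lemma bern_m1 {b k : ℕ} (hk : k ≤ b) :
    ∫ t in (0:ℝ)..1, t * bern b k t = ((k:ℝ)+1) / (((b:ℝ)+1)*((b:ℝ)+2)) := by
  have := bern_int b k 1
  simp only [pow_one] at this
  rw [this, show k + 1 + (b-k) + 1 = b + 2 by omega,
    show b + 2 = (b+1) + 1 by omega, Nat.factorial_succ (b+1), Nat.factorial_succ b,
    Nat.factorial_succ k]
  have h := fact_id hk
  have h1 : (b.factorial : ℝ) ≠ 0 := by positivity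
  have h2 : ((b:ℝ)+1) ≠ 0 := by positivity
  have h3 : ((b:ℝ)+2) ≠ 0 := by positivity
  push_cast
  field_simp
  linear_combination ((b:ℝ)+2) * h

lemma bern_m2 {b k : ℕ} (hk : k ≤ b) :
    ∫ t in (0:ℝ)..1, t^2 * bern b k t
      = ((k:ℝ)+1) * ((k:ℝ)+2) / (((b:ℝ)+1)*((b:ℝ)+2)*((b:ℝ)+3)) := by
  have := bern_int b k 2
  rw [this, show k + 2 + (b-k) + 1 = b + 3 by omega,
    show b + 3 = (b+2) + 1 by omega, show b + 2 = (b+1)+1 by omega,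
    Nat.factorial_succ (b+1+1), Nat.factorial_succ (b+1), Nat.factorial_succ b,
    show k + 2 = (k+1)+1 by omega, Nat.factorial_succ (k+1), Nat.factorial_succ k]
  have h := fact_id hk
  have h1 : (b.factorial : ℝ) ≠ 0 := by positivity
  have h2 : ((b:ℝ)+1) ≠ 0 := by positivity
  have h3 : ((b:ℝ)+2) ≠ 0 := by positivity
  have h4 : ((b:ℝ)+3) ≠ 0 := by positivity
  push_cast
  field_simp
  linear_combination ((k:ℝ)+2) * ((b:ℝ)+2) * ((b:ℝ)+3) * h

noncomputable def S (a b s : ℕ) (g : ℝ → ℝ) (x : ℝ) : ℝ :=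
  ∑ j ∈ range (a+1), bern a j x * ∫ t in (0:ℝ)..1, bern b (j+s) t * g t

lemma bern_zero_at_zero {b k : ℕ} (hk : 1 ≤ k) : bern b k 0 = 0 := by
  simp [bern, zero_pow (by omega : k ≠ 0)]

lemma bern_zero_at_one {b k : ℕ} (hk : k ≤ b - 1) (hb : 1 ≤ b) : bern b k 1 = 0 := by
  simp [bern, zero_pow (by omega : b - k ≠ 0)]

lemma parts {b k : ℕ} (hk1 : 1 ≤ k) (hk2 : k ≤ b) {g g' : ℝ → ℝ}
    (hg : Continuous g) (hg' : Continuous g') (hd : ∀ t, HasDerivAt g (g' t) t) :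
    (∫ t in (0:ℝ)..1, bern b k t * g t) - (∫ t in (0:ℝ)..1, bern b (k-1) t * g t)
      = (1/((b:ℝ)+1)) * ∫ t in (0:ℝ)..1, bern (b+1) k t * g' t := by
  obtain ⟨k, rfl⟩ : ∃ k', k = k' + 1 := ⟨k - 1, by omega⟩
  have hP : ∀ t : ℝ, HasDerivAt (bern (b+1) (k+1))
      (((b:ℝ)+1) * (bern b k t - bern b (k+1) t)) t := fun t => bern_hasDerivAt_succ b k t
  have hfull : ∀ t : ℝ, HasDerivAt (fun t => bern (b+1) (k+1) t * g t)
      (((b:ℝ)+1) * (bern b k t - bern b (k+1) t) * g t + bern (b+1) (k+1) t * g' t) t :=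
    fun t => (hP t).mul (hd t)
  have hint : IntervalIntegrable
      (fun t => ((b:ℝ)+1) * (bern b k t - bern b (k+1) t) * g t + bern (b+1) (k+1) t * g' t)
      MeasureTheory.volume 0 1 := by
    apply Continuous.intervalIntegrable
    exact (((continuous_const.mul ((bern_cont b k).sub (bern_cont b (k+1)))).mul hg).add
      ((bern_cont (b+1) (k+1)).mul hg'))
  have := intervalIntegral.integral_eq_sub_of_hasDerivAt (fun t _ => hfull t) hint
  rw [bern_zero_at_one (by omega) (by omega), bern_zero_at_zero (by omega)] at this
  simp only [zero_mul, sub_zero] at this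
  rw [intervalIntegral.integral_add
      (((continuous_const.fun_mul ((bern_cont b k).fun_sub (bern_cont b (k+1)))).fun_mul
        hg).intervalIntegrable 0 1)
      (((bern_cont (b+1) (k+1)).fun_mul hg').intervalIntegrable 0 1)] at this
  simp only [mul_assoc] at this
  rw [intervalIntegral.integral_const_mul] at this
  have hsplit : ∫ t in (0:ℝ)..1, (bern b k t - bern b (k+1) t) * g t
      = (∫ t in (0:ℝ)..1, bern b k t * g t) - ∫ t in (0:ℝ)..1, bern b (k+1) t * g t := by
    rw [← intervalIntegral.integral_sub (integrable_poly_mul hg b k)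
      (integrable_poly_mul hg b (k+1))]
    congr 1; funext t; ring
  rw [hsplit] at this
  have hb1 : ((b:ℝ)+1) ≠ 0 := by positivity
  have hk1' : k + 1 - 1 = k := by omega
  rw [hk1']
  field_simp
  linarith [this]

lemma S_hasDerivAt (a b s : ℕ) (hab : a + 1 + s ≤ b) {g g' : ℝ → ℝ}
    (hg : Continuous g) (hg' : Continuous g') (hd : ∀ t, HasDerivAt g (g' t) t) (x : ℝ) :
    HasDerivAt (S (a+1) b s g) ((((a:ℝ)+1)/((b:ℝ)+1)) * S a (b+1) (s+1) g' x) x := by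
  set I : ℕ → ℝ := fun j => ∫ t in (0:ℝ)..1, bern b (j+s) t * g t with hI
  have key : ∀ j : ℕ, HasDerivAt (fun x => bern (a+1) j x * I j)
      ((if j = 0 then ((a:ℝ)+1) * (0 - bern a 0 x) else
        ((a:ℝ)+1) * (bern a (j-1) x - bern a j x)) * I j) x := by
    intro j
    match j with
    | 0 => simpa using (bern_hasDerivAt_zero a x).mul_const (I 0)
    | (j+1) => simpa using (bern_hasDerivAt_succ a j x).mul_const (I (j+1))
  have hsum : HasDerivAt (S (a+1) b s g)
      (∑ j ∈ range (a+2), (if j = 0 then ((a:ℝ)+1) * (0 - bern a 0 x) else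
        ((a:ℝ)+1) * (bern a (j-1) x - bern a j x)) * I j) x := by
    have := HasDerivAt.fun_sum (fun j (_ : j ∈ range (a+2)) => key j)
    exact this
  convert hsum using 1
  -- algebraic identity for the sum
  have habel : (∑ j ∈ range (a+2), (if j = 0 then ((a:ℝ)+1) * (0 - bern a 0 x) else
        ((a:ℝ)+1) * (bern a (j-1) x - bern a j x)) * I j)
      = ((a:ℝ)+1) * ∑ j ∈ range (a+1), bern a j x * (I (j+1) - I j) := by
    rw [Finset.sum_range_succ' ]
    simp only [Nat.succ_ne_zero, if_false, if_true, Nat.add_sub_cancel, reduceIte]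
    have expand : ∀ j ∈ range (a+1),
        ((a:ℝ)+1) * (bern a j x - bern a (j+1) x) * I (j+1)
        = ((a:ℝ)+1) * (bern a j x * (I (j+1) - I j))
          + (((a:ℝ)+1) * (bern a j x * I j) - ((a:ℝ)+1) * (bern a (j+1) x * I (j+1))) := by
      intro j _; ring
    rw [Finset.sum_congr rfl expand, Finset.sum_add_distrib,
      Finset.sum_range_sub' (fun j => ((a:ℝ)+1) * (bern a j x * I j)) (a+1),
      bern_of_gt (show a < a+1 by omega) x, Finset.mul_sum]
    ring
  rw [habel]
  have hIdiff : ∀ j ∈ range (a+1), I (j+1) - I j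
      = (1/((b:ℝ)+1)) * ∫ t in (0:ℝ)..1, bern (b+1) (j+(s+1)) t * g' t := by
    intro j hj
    simp only [Finset.mem_range] at hj
    have := parts (b := b) (k := j+1+s) (by omega) (by omega) hg hg' hd
    simp only [hI]
    rw [show j+1+s - 1 = j + s by omega] at this
    rw [show j+(s+1) = j+1+s by omega]
    exact this
  rw [Finset.sum_congr rfl (fun j hj => by rw [hIdiff j hj])]
  unfold S
  rw [Finset.mul_sum, Finset.mul_sum]
  refine Finset.sum_congr rfl fun j _ => by ring

section iter
variable {f : ℝ → ℝ} {r : ℕ}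

lemma contDiff_iterD (hf : ContDiff ℝ (r + 2 : ℕ) f) (i m : ℕ) (h : m + i ≤ r + 2) :
    ContDiff ℝ (m : ℕ) (iteratedDeriv i f) := by
  rw [iteratedDeriv_eq_iterate]
  exact ContDiff.iterate_deriv' m i (hf.of_le (by exact_mod_cast Nat.cast_le.mpr h))

lemma cont_iterD (hf : ContDiff ℝ (r + 2 : ℕ) f) (i : ℕ) (h : i ≤ r + 2) :
    Continuous (iteratedDeriv i f) :=
  (contDiff_iterD hf i 0 (by omega)).continuous

lemma hasDerivAt_iterD (hf : ContDiff ℝ (r + 2 : ℕ) f) (i : ℕ) (h : i + 1 ≤ r + 2) (t : ℝ) :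
    HasDerivAt (iteratedDeriv i f) (iteratedDeriv (i+1) f t) t := by
  have h1 : ContDiff ℝ (1 : ℕ) (iteratedDeriv i f) := contDiff_iterD hf i 1 (by omega)
  have h2 : DifferentiableAt ℝ (iteratedDeriv i f) t := by
    have := h1.differentiable (by simp)
    exact this t
  have := h2.hasDerivAt
  rwa [← iteratedDeriv_succ] at this
end iter

noncomputable def K (n : ℕ) : ℕ → ℝ
  | 0 => (n:ℝ) + 1
  | (i+1) => K n i * (((n:ℝ) - i) / ((n:ℝ) + i + 1))

lemma durrmeyer_iteratedDeriv {f : ℝ → ℝ} {n r : ℕ} (hr2 : r ≤ n)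
    (hf : ContDiff ℝ (r + 2 : ℕ) f) (i : ℕ) (hi : i ≤ r) :
    iteratedDeriv i (durrmeyer n f)
      = fun x => K n i * S (n - i) (n + i) i (iteratedDeriv i f) x := by
  induction i with
  | zero =>
    funext x
    simp only [iteratedDeriv_zero, K, Nat.sub_zero, Nat.add_zero]
    unfold durrmeyer S
    simp
  | succ i ih =>
    have hi' : i ≤ r := by omega
    have hin : i < n := by omega
    have hsub : n - i = (n - i - 1) + 1 := by omega
    have hstep : ∀ y : ℝ, HasDerivAt (fun x => S (n - i) (n + i) i (iteratedDeriv i f) x)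
        ((((n:ℝ) - i)/((n:ℝ) + i + 1)) *
          S (n - (i+1)) (n + (i+1)) (i+1) (iteratedDeriv (i+1) f) y) y := by
      intro y
      have hcond : (n - i - 1) + 1 + i ≤ n + i := by omega
      have h := S_hasDerivAt (n - i - 1) (n + i) i hcond
        (cont_iterD hf i (by omega)) (cont_iterD hf (i+1) (by omega))
        (hasDerivAt_iterD hf i (by omega)) y
      rw [← hsub] at h
      have hc1 : ((n - i - 1 : ℕ):ℝ) + 1 = (n:ℝ) - i := by
        have : ((n - i - 1 : ℕ):ℝ) = (n:ℝ) - (i+1) := by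
          rw [show n-i-1 = n-(i+1) by omega, Nat.cast_sub (by omega : i+1 ≤ n)]
          push_cast; ring
        rw [this]; ring
      have hc2 : ((n + i : ℕ):ℝ) + 1 = (n:ℝ) + i + 1 := by push_cast; ring
      have he1 : n - i - 1 = n - (i+1) := by omega
      have he2 : n + i + 1 = n + (i+1) := by omega
      rw [hc1, he1, he2] at h
      convert h using 2
      push_cast; ring
    funext x
    rw [iteratedDeriv_succ, ih hi']
    have : HasDerivAt (fun x => K n i * S (n - i) (n + i) i (iteratedDeriv i f) x)
        (K n i * ((((n:ℝ) - i)/((n:ℝ) + i + 1)) *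
          S (n - (i+1)) (n + (i+1)) (i+1) (iteratedDeriv (i+1) f) x)) x :=
      (hstep x).const_mul (K n i)
    rw [this.deriv]
    show _ = K n i * (((n:ℝ) - i) / ((n:ℝ) + i + 1)) * _
    ring

lemma K_mul {n r : ℕ} (hr : r ≤ n) :
    K n r * ((n-r).factorial : ℝ) * ((n+r).factorial : ℝ)
      = ((n:ℝ)+1) * (n.factorial : ℝ) * (n.factorial : ℝ) := by
  induction r with
  | zero => simp [K]
  | succ r ih =>
    have hr' : r ≤ n := by omega
    have ihh := ih hr'
    have h1 : (n + (r+1)).factorial = (n + r + 1) * (n + r).factorial := by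
      rw [show n + (r+1) = (n+r) + 1 by omega, Nat.factorial_succ]
    have h2 : (n - r).factorial = (n - r) * (n - (r+1)).factorial := by
      have : n - r = (n - (r+1)) + 1 := by omega
      rw [this, Nat.factorial_succ, ← this]
    have hden : ((n:ℝ) + r + 1) ≠ 0 := by positivity
    rw [show (K n (r+1) : ℝ) = K n r * (((n:ℝ) - r) / ((n:ℝ) + r + 1)) from rfl, h1]
    rw [h2] at ihh
    push_cast [Nat.cast_sub hr'] at ihh ⊢
    field_simp
    linear_combination ihh

lemma K_norm {n r : ℕ} (hr : r ≤ n) :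
    (((n+r+1).factorial : ℝ) * ((n-r).factorial : ℝ) /
      (((n+1).factorial : ℝ) * (n.factorial : ℝ))) * K n r = (n:ℝ) + r + 1 := by
  have h := K_mul hr
  have e1 : ((n+r+1).factorial : ℝ) = ((n:ℝ)+r+1) * ((n+r).factorial : ℝ) := by
    rw [show n + r + 1 = (n+r)+1 from rfl, Nat.factorial_succ]; push_cast; ring
  have e2 : ((n+1).factorial : ℝ) = ((n:ℝ)+1) * (n.factorial : ℝ) := by
    rw [Nat.factorial_succ]; push_cast; ring
  rw [e1, e2]
  have n1 : ((n+r).factorial : ℝ) ≠ 0 := by positivity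
  have n2 : ((n-r).factorial : ℝ) ≠ 0 := by positivity
  have n3 : (n.factorial : ℝ) ≠ 0 := by positivity
  have n4 : ((n:ℝ)+1) ≠ 0 := by positivity
  field_simp
  linear_combination h

lemma le_supNorm {h : ℝ → ℝ} (hc : Continuous h) {t : ℝ} (ht : t ∈ Set.Icc (0:ℝ) 1) :
    |h t| ≤ supNorm h := by
  have hb : BddAbove (Set.range fun x : Set.Icc (0:ℝ) 1 => |h x|) := by
    have := (isCompact_Icc (a := (0:ℝ)) (b := 1)).bddAbove_image
      (hc.abs.continuousOn (s := Set.Icc 0 1))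
    rwa [Set.image_eq_range] at this
  exact le_ciSup hb ⟨t, ht⟩

lemma le_modCont {h : ℝ → ℝ} (hc : Continuous h) {x y δ : ℝ}
    (hx : x ∈ Set.Icc (0:ℝ) 1) (hy : y ∈ Set.Icc (0:ℝ) 1) (hxy : |x - y| ≤ δ) :
    |h x - h y| ≤ modCont h δ := by
  obtain ⟨C, hC⟩ : ∃ C, ∀ z ∈ Set.Icc (0:ℝ) 1, |h z| ≤ C := by
    obtain ⟨C, hC⟩ := (isCompact_Icc (a := (0:ℝ)) (b := 1)).bddAbove_image
      (hc.abs.continuousOn (s := Set.Icc 0 1)) |>.imp (fun C hC => hC)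
    exact ⟨C, fun z hz => hC (Set.mem_image_of_mem _ hz)⟩
  apply le_csSup
  · refine ⟨2*C, ?_⟩
    rintro d ⟨u, hu, v, hv, -, rfl⟩
    calc |h u - h v| ≤ |h u| + |h v| := abs_sub _ _
    _ ≤ C + C := add_le_add (hC u hu) (hC v hv)
    _ = 2*C := by ring
  · exact ⟨x, hx, y, hy, hxy, rfl⟩

lemma modCont_nonneg {h : ℝ → ℝ} (hc : Continuous h) {δ : ℝ} (hδ : 0 ≤ δ) :
    0 ≤ modCont h δ := by
  have := le_modCont hc (x := 0) (y := 0) (by norm_num) (by norm_num) (by simpa using hδ)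
  simpa using this.trans_eq' (by simp)

lemma taylor_bound {g g' g'' : ℝ → ℝ} {M : ℝ}
    (hd : ∀ t, HasDerivAt g (g' t) t) (hd' : ∀ t, HasDerivAt g' (g'' t) t)
    (hc'' : Continuous g'')
    (hM : ∀ s ∈ Set.Icc (0:ℝ) 1, |g'' s| ≤ M)
    {μ t : ℝ} (hμ : μ ∈ Set.Icc (0:ℝ) 1) (ht : t ∈ Set.Icc (0:ℝ) 1) :
    |g t - g μ - g' μ * (t - μ)| ≤ M/2 * (t - μ)^2 := by
  have hc' : Continuous g' := Differentiable.continuous fun t => (hd' t).differentiableAt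
  have hc : Continuous g := Differentiable.continuous fun t => (hd t).differentiableAt
  have hstep1 : ∀ s ∈ Set.Icc (0:ℝ) 1, |g' s - g' μ| ≤ M * |s - μ| := by
    intro s hs
    have hFTC : ∫ u in μ..s, g'' u = g' s - g' μ :=
      intervalIntegral.integral_eq_sub_of_hasDerivAt (fun u _ => hd' u)
        (hc''.intervalIntegrable _ _)
    rw [← hFTC]
    have hb : ∀ u ∈ Set.uIoc μ s, ‖g'' u‖ ≤ M := by
      intro u hu
      have : u ∈ Set.Icc (0:ℝ) 1 :=
        (Set.uIoc_subset_uIcc.trans (Set.uIcc_subset_Icc hμ hs)) hu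
      simpa using hM u this
    simpa [abs_sub_comm s μ] using intervalIntegral.norm_integral_le_of_norm_le_const hb
  have hFTC2 : ∫ s in μ..t, (g' s - g' μ) = g t - g μ - g' μ * (t - μ) := by
    have hder : ∀ s ∈ Set.uIcc μ t, HasDerivAt (fun s => g s - g' μ * s) (g' s - g' μ) s := by
      intro s _
      have h1 : HasDerivAt (fun s : ℝ => g' μ * s) (g' μ) s := by
        simpa using (hasDerivAt_id s).const_mul (g' μ)
      exact (hd s).sub h1
    have := intervalIntegral.integral_eq_sub_of_hasDerivAt hder
      ((hc'.sub continuous_const).intervalIntegrable _ _)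
    rw [this]; ring
  rw [← hFTC2]
  rcases le_total μ t with hle | hle
  · have hsub : ∀ s ∈ Set.Icc μ t, s ∈ Set.Icc (0:ℝ) 1 := by
      intro s hs
      exact ⟨le_trans hμ.1 hs.1, le_trans hs.2 ht.2⟩
    calc |∫ s in μ..t, (g' s - g' μ)| ≤ ∫ s in μ..t, |g' s - g' μ| :=
          intervalIntegral.abs_integral_le_integral_abs hle
    _ ≤ ∫ s in μ..t, M * (s - μ) := by
        apply intervalIntegral.integral_mono_on hle
          ((hc'.sub continuous_const).abs.intervalIntegrable _ _)
          ((continuous_const.mul (continuous_id.sub continuous_const)).intervalIntegrable _ _)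
        intro s hs
        have := hstep1 s (hsub s hs)
        rwa [abs_of_nonneg (by linarith [hs.1] : (0:ℝ) ≤ s - μ)] at this
    _ = M/2 * (t - μ)^2 := by
        rw [intervalIntegral.integral_const_mul]
        have : ∫ s in μ..t, (s - μ) = (t - μ)^2/2 := by
          have h := intervalIntegral.integral_comp_sub_right (a := μ) (b := t)
            (fun u => u) μ
          rw [h, integral_id]
          ring
        rw [this]; ring
  · have hsub : ∀ s ∈ Set.Icc t μ, s ∈ Set.Icc (0:ℝ) 1 := by
      intro s hs
      exact ⟨le_trans ht.1 hs.1, le_trans hs.2 hμ.2⟩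
    rw [intervalIntegral.integral_symm, abs_neg]
    calc |∫ s in t..μ, (g' s - g' μ)| ≤ ∫ s in t..μ, |g' s - g' μ| :=
          intervalIntegral.abs_integral_le_integral_abs hle
    _ ≤ ∫ s in t..μ, M * (μ - s) := by
        apply intervalIntegral.integral_mono_on hle
          ((hc'.sub continuous_const).abs.intervalIntegrable _ _)
          ((continuous_const.mul (continuous_const.sub continuous_id)).intervalIntegrable _ _)
        intro s hs
        have := hstep1 s (hsub s hs)
        rwa [abs_sub_comm s μ, abs_of_nonneg (by linarith [hs.2] : (0:ℝ) ≤ μ - s)] at this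
    _ = M/2 * (t - μ)^2 := by
        rw [intervalIntegral.integral_const_mul]
        have : ∫ s in t..μ, (μ - s) = (μ - t)^2/2 := by
          have h := intervalIntegral.integral_comp_sub_left (a := t) (b := μ)
            (fun u => u) μ
          rw [h, integral_id]
          ring
        rw [this]; ring

lemma mean_bound {b k : ℕ} (hk : k ≤ b) {g : ℝ → ℝ} (hg : Continuous g) {c M : ℝ}
    (hM : 0 ≤ M)
    (hR : ∀ t ∈ Set.Icc (0:ℝ) 1,
      |g t - g (((k:ℝ)+1)/((b:ℝ)+2)) - c * (t - ((k:ℝ)+1)/((b:ℝ)+2))|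
        ≤ M/2 * (t - ((k:ℝ)+1)/((b:ℝ)+2))^2) :
    |((b:ℝ)+1) * (∫ t in (0:ℝ)..1, bern b k t * g t) - g (((k:ℝ)+1)/((b:ℝ)+2))|
      ≤ M / (8*((b:ℝ)+3)) := by
  set μ := ((k:ℝ)+1)/((b:ℝ)+2) with hμdef
  have hb2 : ((b:ℝ)+2) ≠ 0 := by positivity
  have hb1 : ((b:ℝ)+1) ≠ 0 := by positivity
  have hb3 : ((b:ℝ)+3) ≠ 0 := by positivity
  have hident : ((b:ℝ)+1) * (∫ t in (0:ℝ)..1, bern b k t * g t) - g μ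
      = ((b:ℝ)+1) * ∫ t in (0:ℝ)..1, bern b k t * (g t - g μ - c*(t - μ)) := by
    have hsplit : ∫ t in (0:ℝ)..1, bern b k t * (g t - g μ - c*(t-μ))
        = (∫ t in (0:ℝ)..1, bern b k t * g t)
          - ((g μ - c*μ) * ∫ t in (0:ℝ)..1, bern b k t)
          - c * ∫ t in (0:ℝ)..1, t * bern b k t := by
      rw [← intervalIntegral.integral_const_mul, ← intervalIntegral.integral_const_mul,
        ← intervalIntegral.integral_sub (integrable_poly_mul hg b k)
          ((continuous_const.fun_mul (bern_cont b k)).intervalIntegrable 0 1),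
        ← intervalIntegral.integral_sub]
      · congr 1; funext t; ring
      · exact ((bern_cont b k).mul hg |>.sub
          (continuous_const.mul (bern_cont b k))).intervalIntegrable 0 1
      · exact (continuous_const.mul (continuous_id.mul (bern_cont b k))).intervalIntegrable 0 1
    rw [hsplit, bern_m0 hk, bern_m1 hk]
    rw [hμdef]
    field_simp
    ring
  rw [hident]
  have habs : |∫ t in (0:ℝ)..1, bern b k t * (g t - g μ - c*(t - μ))|
      ≤ ∫ t in (0:ℝ)..1, bern b k t * (M/2 * (t-μ)^2) := by
    calc |∫ t in (0:ℝ)..1, bern b k t * (g t - g μ - c*(t - μ))|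
        ≤ ∫ t in (0:ℝ)..1, |bern b k t * (g t - g μ - c*(t - μ))| :=
          intervalIntegral.abs_integral_le_integral_abs zero_le_one
    _ ≤ ∫ t in (0:ℝ)..1, bern b k t * (M/2 * (t-μ)^2) := by
        apply intervalIntegral.integral_mono_on zero_le_one
          (((bern_cont b k).mul ((hg.sub continuous_const).sub
            (continuous_const.mul (continuous_id.sub continuous_const)))).abs.intervalIntegrable 0 1)
          (((bern_cont b k).mul (continuous_const.mul
            ((continuous_id.sub continuous_const).pow 2))).intervalIntegrable 0 1)
        intro t ht
        show |bern b k t * (g t - g μ - c*(t - μ))| ≤ bern b k t * (M/2 * (t-μ)^2)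
        rw [abs_mul, abs_of_nonneg (bern_nonneg ht)]
        exact mul_le_mul_of_nonneg_left (hR t ht) (bern_nonneg ht)
  have hval : ∫ t in (0:ℝ)..1, bern b k t * (M/2 * (t-μ)^2)
      = M/2 * ((((k:ℝ)+1)*((k:ℝ)+2)/(((b:ℝ)+1)*((b:ℝ)+2)*((b:ℝ)+3)))
          - 2*μ*(((k:ℝ)+1)/(((b:ℝ)+1)*((b:ℝ)+2))) + μ^2 * (1/((b:ℝ)+1))) := by
    have hexp : ∀ t : ℝ, bern b k t * (M/2 * (t-μ)^2)
        = (M/2) * (t^2 * bern b k t) - (M*μ) * (t * bern b k t)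
          + (M/2*μ^2) * bern b k t := by
      intro t; ring
    simp_rw [hexp]
    rw [intervalIntegral.integral_add, intervalIntegral.integral_sub,
      intervalIntegral.integral_const_mul, intervalIntegral.integral_const_mul,
      intervalIntegral.integral_const_mul, bern_m2 hk, bern_m1 hk, bern_m0 hk]
    · ring
    · exact (continuous_const.mul ((continuous_id.pow 2).mul (bern_cont b k))).intervalIntegrable 0 1
    · exact (continuous_const.mul (continuous_id.mul (bern_cont b k))).intervalIntegrable 0 1
    · exact ((continuous_const.mul ((continuous_id.pow 2).mul (bern_cont b k))).sub
        (continuous_const.mul (continuous_id.mul (bern_cont b k)))).intervalIntegrable 0 1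
    · exact (continuous_const.mul (bern_cont b k)).intervalIntegrable 0 1
  rw [abs_mul, abs_of_nonneg (by positivity : (0:ℝ) ≤ (b:ℝ)+1)]
  have hQ : ((b:ℝ)+1) * (M/2 * ((((k:ℝ)+1)*((k:ℝ)+2)/(((b:ℝ)+1)*((b:ℝ)+2)*((b:ℝ)+3)))
      - 2*μ*(((k:ℝ)+1)/(((b:ℝ)+1)*((b:ℝ)+2))) + μ^2 * (1/((b:ℝ)+1))))
      ≤ M / (8*((b:ℝ)+3)) := by
    rw [hμdef]
    have hkb : (k:ℝ) ≤ (b:ℝ) := by exact_mod_cast hk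
    have hk0 : (0:ℝ) ≤ (k:ℝ) := by positivity
    have e : ((b:ℝ)+1) * (M/2 * ((((k:ℝ)+1)*((k:ℝ)+2)/(((b:ℝ)+1)*((b:ℝ)+2)*((b:ℝ)+3)))
        - 2*(((k:ℝ)+1)/((b:ℝ)+2))*(((k:ℝ)+1)/(((b:ℝ)+1)*((b:ℝ)+2)))
        + (((k:ℝ)+1)/((b:ℝ)+2))^2 * (1/((b:ℝ)+1))))
        = M * (((k:ℝ)+1)*(((b:ℝ)+1)-(k:ℝ))) / (2*(((b:ℝ)+2)^2*((b:ℝ)+3))) := by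
      field_simp
      ring
    rw [e, div_le_div_iff₀ (by positivity) (by positivity)]
    have h2 : 4*(((k:ℝ)+1)*(((b:ℝ)+1)-(k:ℝ))) ≤ ((b:ℝ)+2)^2 := by
      nlinarith [sq_nonneg ((b:ℝ) - 2*(k:ℝ))]
    have h3 : 0 ≤ M*((b:ℝ)+3) := by positivity
    nlinarith [mul_le_mul_of_nonneg_left h2 h3]
  calc ((b:ℝ)+1) * |∫ t in (0:ℝ)..1, bern b k t * (g t - g μ - c*(t - μ))|
      ≤ ((b:ℝ)+1) * ∫ t in (0:ℝ)..1, bern b k t * (M/2 * (t-μ)^2) :=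
        mul_le_mul_of_nonneg_left habs (by positivity)
  _ = ((b:ℝ)+1) * (M/2 * ((((k:ℝ)+1)*((k:ℝ)+2)/(((b:ℝ)+1)*((b:ℝ)+2)*((b:ℝ)+3)))
      - 2*μ*(((k:ℝ)+1)/(((b:ℝ)+1)*((b:ℝ)+2))) + μ^2 * (1/((b:ℝ)+1)))) := by rw [hval]
  _ ≤ M / (8*((b:ℝ)+3)) := hQ

theorem durrmeyer_derivative_difference_normalized
    (n r : ℕ) (hr1 : 1 ≤ r) (hr2 : r ≤ n)
    (f : ℝ → ℝ) (hf : ContDiff ℝ (r + 2 : ℕ) f) :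
    ∀ x ∈ Set.Icc (0:ℝ) 1,
      |((n + r + 1).factorial : ℝ) * ((n - r).factorial : ℝ) /
            (((n + 1).factorial : ℝ) * (n.factorial : ℝ)) *
            iteratedDeriv r (durrmeyer n f) x
          - durrmeyer (n - r) (iteratedDeriv r f) x| ≤
        (1 / 4) * supNorm (iteratedDeriv (r + 2) f) *
            (((n : ℝ) + 3) / (((n : ℝ) + 3) ^ 2 - (r : ℝ) ^ 2))
          + modCont (iteratedDeriv r f)
              ((r : ℝ) * ((n : ℝ) - (r : ℝ)) / (((n : ℝ) + 2) ^ 2 - (r : ℝ) ^ 2)) := by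
  intro x hx
  set g := iteratedDeriv r f with hg_def
  set g' := iteratedDeriv (r+1) f with hg'_def
  set g'' := iteratedDeriv (r+2) f with hg''_def
  have hg : Continuous g := cont_iterD hf r (by omega)
  have hg'c : Continuous g' := cont_iterD hf (r+1) (by omega)
  have hg'' : Continuous g'' := cont_iterD hf (r+2) (by omega)
  have hd : ∀ t, HasDerivAt g (g' t) t := hasDerivAt_iterD hf r (by omega)
  have hd' : ∀ t, HasDerivAt g' (g'' t) t := hasDerivAt_iterD hf (r+1) (by omega)
  set M := supNorm g'' with hM_def
  have hM : ∀ s ∈ Set.Icc (0:ℝ) 1, |g'' s| ≤ M := fun s hs => le_supNorm hg'' hs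
  have hM0 : 0 ≤ M := le_trans (abs_nonneg _) (hM 0 (by norm_num))
  set δ := (r:ℝ) * ((n:ℝ) - (r:ℝ)) / (((n:ℝ)+2)^2 - (r:ℝ)^2) with hδ_def
  have hrn : (r:ℝ) ≤ (n:ℝ) := by exact_mod_cast hr2
  have hdenpos : (0:ℝ) < ((n:ℝ)+2)^2 - (r:ℝ)^2 := by nlinarith
  have hδ0 : 0 ≤ δ := by
    apply div_nonneg _ (le_of_lt hdenpos)
    have : (0:ℝ) ≤ (r:ℝ) := by positivity
    nlinarith
  -- rewrite LHS as a single sum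
  have hiter := durrmeyer_iteratedDeriv hr2 hf r le_rfl
  rw [hiter]
  have hKN := K_norm (n := n) (r := r) hr2
  set N := ((n + r + 1).factorial : ℝ) * ((n - r).factorial : ℝ) /
      (((n + 1).factorial : ℝ) * (n.factorial : ℝ)) with hN_def
  have hfactor : N * ((fun x => K n r * S (n - r) (n + r) r g x) x)
      = ((n:ℝ) + r + 1) * S (n - r) (n + r) r g x := by
    show N * (K n r * _) = _
    rw [← mul_assoc, hKN]
  rw [hfactor]
  -- expand into a sum of per-index errors
  set I₁ : ℕ → ℝ := fun j => ∫ t in (0:ℝ)..1, bern (n+r) (j+r) t * g t with hI₁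
  set I₂ : ℕ → ℝ := fun j => ∫ t in (0:ℝ)..1, bern (n-r) j t * g t with hI₂
  set A : ℕ → ℝ := fun j => ((n:ℝ)+r+1) * I₁ j - (((n-r:ℕ):ℝ)+1) * I₂ j with hA
  have hsum : ((n:ℝ) + r + 1) * S (n - r) (n + r) r g x - durrmeyer (n - r) g x
      = ∑ j ∈ range (n - r + 1), bern (n-r) j x * A j := by
    unfold S durrmeyer
    rw [Finset.mul_sum, Finset.mul_sum, ← Finset.sum_sub_distrib]
    refine Finset.sum_congr rfl fun j _ => ?_
    simp only [hA, hI₁, hI₂]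
    ring
  rw [hsum]
  -- per-index estimate
  have hcast : ((n - r : ℕ):ℝ) = (n:ℝ) - (r:ℝ) := by
    rw [Nat.cast_sub hr2]
  have hperj : ∀ j ∈ range (n - r + 1),
      |A j| ≤ M/(8*((n:ℝ)+r+3)) + M/(8*((n:ℝ)-r+3)) + modCont g δ := by
    intro j hj
    have hjle : j ≤ n - r := by simpa using Nat.lt_succ_iff.mp (Finset.mem_range.mp hj)
    have hjr : (j:ℝ) ≤ (n:ℝ) - r := by
      rw [← hcast]; exact_mod_cast hjle
    have hj0 : (0:ℝ) ≤ (j:ℝ) := by positivity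
    set μ₁ := (((j+r:ℕ):ℝ)+1)/(((n+r:ℕ):ℝ)+2) with hμ₁
    set μ₂ := (((j:ℕ):ℝ)+1)/(((n-r:ℕ):ℝ)+2) with hμ₂
    have hμ₁mem : μ₁ ∈ Set.Icc (0:ℝ) 1 := by
      constructor
      · positivity
      · rw [div_le_one (by positivity)]
        push_cast
        linarith
    have hμ₂mem : μ₂ ∈ Set.Icc (0:ℝ) 1 := by
      constructor
      · positivity
      · rw [div_le_one (by positivity)]
        rw [hcast]
        linarith
    have h1 : |(((n+r:ℕ):ℝ)+1) * I₁ j - g μ₁| ≤ M/(8*(((n+r:ℕ):ℝ)+3)) := by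
      apply mean_bound (by omega : j + r ≤ n + r) hg hM0
      intro t ht
      exact taylor_bound hd hd' hg'' hM hμ₁mem ht
    have h2 : |(((n-r:ℕ):ℝ)+1) * I₂ j - g μ₂| ≤ M/(8*(((n-r:ℕ):ℝ)+3)) := by
      apply mean_bound hjle hg hM0
      intro t ht
      exact taylor_bound hd hd' hg'' hM hμ₂mem ht
    have h3 : |g μ₁ - g μ₂| ≤ modCont g δ := by
      apply le_modCont hg hμ₁mem hμ₂mem
      have hdiff : μ₁ - μ₂ = (r:ℝ) * ((n:ℝ) - r - 2*j) / (((n:ℝ)+2)^2 - (r:ℝ)^2) := by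
        rw [hμ₁, hμ₂, hcast]
        push_cast
        have d1 : ((n:ℝ)+r+2) ≠ 0 := by positivity
        have d2 : ((n:ℝ)-r+2) ≠ 0 := by nlinarith
        have d3 : (((n:ℝ)+2)^2 - (r:ℝ)^2) ≠ 0 := ne_of_gt hdenpos
        field_simp
        ring
      rw [hdiff, hδ_def, abs_div, abs_of_pos hdenpos, abs_mul,
        abs_of_nonneg (by positivity : (0:ℝ) ≤ (r:ℝ))]
      have habs2 : |(n:ℝ) - r - 2*j| ≤ (n:ℝ) - r := abs_le.mpr ⟨by linarith, by linarith⟩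
      gcongr
    calc |A j| = |((((n+r:ℕ):ℝ)+1) * I₁ j - g μ₁) + (g μ₁ - g μ₂)
        + (g μ₂ - ((((n-r:ℕ):ℝ)+1) * I₂ j))| := by
          rw [hA]
          push_cast
          ring_nf
    _ ≤ |(((n+r:ℕ):ℝ)+1) * I₁ j - g μ₁| + |g μ₁ - g μ₂|
        + |g μ₂ - ((((n-r:ℕ):ℝ)+1) * I₂ j)| := by
          exact (abs_add_le _ _).trans (add_le_add_left (abs_add_le _ _) _)
    _ ≤ M/(8*((n:ℝ)+r+3)) + modCont g δ + M/(8*((n:ℝ)-r+3)) := by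
          refine add_le_add (add_le_add ?_ h3) ?_
          · exact h1.trans_eq (by push_cast; ring)
          · rw [abs_sub_comm]
            exact h2.trans_eq (by rw [hcast])
    _ = M/(8*((n:ℝ)+r+3)) + M/(8*((n:ℝ)-r+3)) + modCont g δ := by ring
  -- combine
  have hbound : |∑ j ∈ range (n - r + 1), bern (n-r) j x * A j|
      ≤ M/(8*((n:ℝ)+r+3)) + M/(8*((n:ℝ)-r+3)) + modCont g δ := by
    set B := M/(8*((n:ℝ)+r+3)) + M/(8*((n:ℝ)-r+3)) + modCont g δ with hB
    calc |∑ j ∈ range (n - r + 1), bern (n-r) j x * A j|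
        ≤ ∑ j ∈ range (n - r + 1), |bern (n-r) j x * A j| :=
          Finset.abs_sum_le_sum_abs _ _
    _ ≤ ∑ j ∈ range (n - r + 1), bern (n-r) j x * B := by
        refine Finset.sum_le_sum fun j hj => ?_
        rw [abs_mul, abs_of_nonneg (bern_nonneg hx)]
        exact mul_le_mul_of_nonneg_left (hperj j hj) (bern_nonneg hx)
    _ = B := by rw [← Finset.sum_mul, bern_sum, one_mul]
  refine hbound.trans ?_
  have heq : M/(8*((n:ℝ)+r+3)) + M/(8*((n:ℝ)-r+3))
      = 1/4 * M * (((n:ℝ)+3)/(((n:ℝ)+3)^2 - (r:ℝ)^2)) := by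
    have d1 : ((n:ℝ)+r+3) ≠ 0 := by positivity
    have d2 : ((n:ℝ)-r+3) ≠ 0 := by nlinarith
    have d3 : (((n:ℝ)+3)^2 - (r:ℝ)^2) = ((n:ℝ)+r+3)*((n:ℝ)-r+3) := by ring
    rw [d3]
    field_simp
    ring
  rw [heq]
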